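/- There exists a constant C > 0 depending only on ε' ∈ (0,1) such that for every natural number j ≥ 1 and every sequence M₁ ≤ M₂ ≤ ... ≤ M_{j-1} of nonnegative reals, ∑_{r=1}^{j-1} M_r ∑_{s=0}^{r-1} (s+2)^{-2} (r-s)^{-2+ε'} ≤ C ∑_{ℓ=1}^{j-1} M_ℓ ℓ^{-2+ε'}. -/
import Mathlib

open Finset Real

private lemma aux_pt (p : ℝ) (hp1 : 1 < p) (hp2 : p ≤ 2) (r s : ℕ) (hs : s < r) :
    ((s:ℝ)+2)^(-2:ℝ) * ((r:ℝ)-s)^(-p) ≤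
      4 * (r:ℝ)^(-p) * (((s:ℝ)+2)^(-2:ℝ) + ((r:ℝ)-s)^(-p)) := by
  have hr1 : (1:ℝ) ≤ (r:ℝ) := by exact_mod_cast Nat.one_le_iff_ne_zero.mpr (by omega)
  have hx : (0:ℝ) < (s:ℝ)+2 := by positivity
  have hy : (0:ℝ) < (r:ℝ)-(s:ℝ) := by
    have : (s:ℝ) < (r:ℝ) := by exact_mod_cast hs
    linarith
  have hxnn : (0:ℝ) ≤ ((s:ℝ)+2)^(-2:ℝ) := Real.rpow_nonneg hx.le _
  have hynn : (0:ℝ) ≤ ((r:ℝ)-(s:ℝ))^(-p) := Real.rpow_nonneg hy.le _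
  have hRnn : (0:ℝ) ≤ (r:ℝ)^(-p) := Real.rpow_nonneg (by linarith) _
  rcases le_or_gt (2*s) r with h | h
  · -- (r-s)^(-p) ≤ 4 r^(-p)
    have hRy : (r:ℝ) ≤ 2*((r:ℝ)-(s:ℝ)) := by
      have : (2*s:ℝ) ≤ (r:ℝ) := by exact_mod_cast h
      push_cast at this ⊢; linarith
    have h1 : (2*((r:ℝ)-(s:ℝ)))^(-p) ≤ (r:ℝ)^(-p) :=
      Real.rpow_le_rpow_of_nonpos (by linarith) hRy (by linarith)
    have h2 : (2*((r:ℝ)-(s:ℝ)))^(-p) = (2:ℝ)^(-p) * ((r:ℝ)-(s:ℝ))^(-p) :=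
      Real.mul_rpow (by norm_num) hy.le
    have h2p : (2:ℝ)^p * (2:ℝ)^(-p) = 1 := by
      rw [← Real.rpow_add (by norm_num)]; simp
    have h4 : (2:ℝ)^p ≤ 4 := by
      have := Real.rpow_le_rpow_of_exponent_le one_le_two hp2
      rwa [show (2:ℝ)^(2:ℝ) = 4 by
        rw [show (2:ℝ) = ((2:ℕ):ℝ) by norm_num, Real.rpow_natCast]; norm_num] at this
    have h3 : ((r:ℝ)-(s:ℝ))^(-p) ≤ 4 * (r:ℝ)^(-p) := by
      have h2ppos : (0:ℝ) < (2:ℝ)^p := Real.rpow_pos_of_pos (by norm_num) _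
      have := mul_le_mul_of_nonneg_left (h2 ▸ h1) h2ppos.le
      calc ((r:ℝ)-(s:ℝ))^(-p) = (2:ℝ)^p * ((2:ℝ)^(-p) * ((r:ℝ)-(s:ℝ))^(-p)) := by
            rw [← mul_assoc, h2p, one_mul]
        _ ≤ (2:ℝ)^p * (r:ℝ)^(-p) := this
        _ ≤ 4 * (r:ℝ)^(-p) := mul_le_mul_of_nonneg_right h4 hRnn
    nlinarith [mul_le_mul_of_nonneg_left h3 hxnn, mul_nonneg hRnn hynn]
  · -- (s+2)^(-2) ≤ 4 r^(-p)
    have hRx : (r:ℝ) ≤ 2*((s:ℝ)+2) := by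
      have : (r:ℝ) ≤ (2*s:ℝ) := by exact_mod_cast h.le
      push_cast at this ⊢; linarith
    have h1 : (2*((s:ℝ)+2))^(-2:ℝ) ≤ (r:ℝ)^(-2:ℝ) :=
      Real.rpow_le_rpow_of_nonpos (by linarith) hRx (by norm_num)
    have h2 : (2*((s:ℝ)+2))^(-2:ℝ) = (2:ℝ)^(-2:ℝ) * ((s:ℝ)+2)^(-2:ℝ) :=
      Real.mul_rpow (by norm_num) hx.le
    have h2v : (2:ℝ)^(-2:ℝ) = 1/4 := by
      rw [Real.rpow_neg (by norm_num), show (2:ℝ)^(2:ℝ) = 4 by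
        rw [show (2:ℝ) = ((2:ℕ):ℝ) by norm_num, Real.rpow_natCast]; norm_num]
      norm_num
    have hr2p : (r:ℝ)^(-2:ℝ) ≤ (r:ℝ)^(-p) :=
      Real.rpow_le_rpow_of_exponent_le hr1 (by linarith)
    have h3 : ((s:ℝ)+2)^(-2:ℝ) ≤ 4 * (r:ℝ)^(-p) := by
      rw [h2, h2v] at h1
      linarith
    nlinarith [mul_le_mul_of_nonneg_right h3 hynn, mul_nonneg hRnn hxnn]

theorem stmt_7 (ε' : ℝ) (hε : ε' ∈ Set.Ioo (0 : ℝ) 1) :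
    ∃ C > 0, ∀ j : ℕ, 1 ≤ j → ∀ M : ℕ → ℝ,
      (∀ r, 0 ≤ M r) → Monotone M →
      ∑ r ∈ Finset.Icc 1 (j - 1),
          M r * ∑ s ∈ Finset.range r, ((s : ℝ) + 2) ^ (-2 : ℝ) * ((r : ℝ) - s) ^ (-2 + ε')
        ≤ C * ∑ l ∈ Finset.Icc 1 (j - 1), M l * (l : ℝ) ^ (-2 + ε') := by
  obtain ⟨hε0, hε1⟩ := hε
  set p : ℝ := 2 - ε' with hp
  have hp1 : 1 < p := by simp only [hp]; linarith
  have hp2 : p ≤ 2 := by simp only [hp]; linarith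
  have hpe : -2 + ε' = -p := by simp only [hp]; ring
  have hsum : Summable (fun n : ℕ => ((n : ℝ) + 1) ^ (-p)) := by
    have h0 := (Real.summable_nat_rpow (p := -p)).mpr (by linarith)
    have h2 := h0.comp_injective Nat.succ_injective
    refine h2.congr fun n => ?_
    simp [Function.comp, Nat.succ_eq_add_one]
  set T : ℝ := ∑' n : ℕ, ((n : ℝ) + 1) ^ (-p) with hT
  have htermnn : ∀ n : ℕ, 0 ≤ ((n : ℝ) + 1) ^ (-p) :=
    fun n => Real.rpow_nonneg (by positivity) _
  have hT1 : (1:ℝ) ≤ T := by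
    have := Summable.le_tsum hsum 0 (fun i _ => htermnn i)
    simpa using this
  have hA : ∀ r : ℕ, ∑ s ∈ Finset.range r, ((s:ℝ)+2)^(-2:ℝ) ≤ T := by
    intro r
    calc ∑ s ∈ Finset.range r, ((s:ℝ)+2)^(-2:ℝ)
        ≤ ∑ s ∈ Finset.range r, ((s:ℝ)+1)^(-p) := by
          refine Finset.sum_le_sum fun s _ => ?_
          calc ((s:ℝ)+2)^(-2:ℝ) ≤ ((s:ℝ)+1)^(-2:ℝ) :=
                Real.rpow_le_rpow_of_nonpos (by positivity) (by linarith) (by norm_num)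
            _ ≤ ((s:ℝ)+1)^(-p) :=
                Real.rpow_le_rpow_of_exponent_le (by linarith [Nat.cast_nonneg (α := ℝ) s]) (by linarith)
      _ ≤ T := Summable.sum_le_tsum _ (fun i _ => htermnn i) hsum
  have hB : ∀ r : ℕ, ∑ s ∈ Finset.range r, ((r:ℝ)-(s:ℝ))^(-p) ≤ T := by
    intro r
    have hre : ∑ s ∈ Finset.range r, ((r:ℝ)-(s:ℝ))^(-p)
        = ∑ s ∈ Finset.range r, ((s:ℝ)+1)^(-p) := by
      rw [← Finset.sum_range_reflect (fun s => ((s:ℝ)+1)^(-p)) r]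
      refine Finset.sum_congr rfl fun s hs => ?_
      rw [Finset.mem_range] at hs
      congr 1
      have : ((r - 1 - s : ℕ) : ℝ) = (r:ℝ) - 1 - (s:ℝ) := by
        have h1 : s ≤ r - 1 := by omega
        have h2 : 1 ≤ r := by omega
        push_cast [Nat.cast_sub h1, Nat.cast_sub h2]
        ring
      rw [this]; ring
    rw [hre]
    exact Summable.sum_le_tsum _ (fun i _ => htermnn i) hsum
  refine ⟨8 * T, by linarith, fun j hj M hM _ => ?_⟩
  have hkey : ∀ r ∈ Finset.Icc 1 (j-1),
      M r * ∑ s ∈ Finset.range r, ((s:ℝ)+2)^(-2:ℝ) * ((r:ℝ)-(s:ℝ))^(-2+ε')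
        ≤ (8*T) * (M r * (r:ℝ)^(-2+ε')) := by
    intro r hr
    rw [Finset.mem_Icc] at hr
    have hr1 : 1 ≤ r := hr.1
    have hRnn : (0:ℝ) ≤ (r:ℝ)^(-p) := Real.rpow_nonneg (Nat.cast_nonneg r) _
    have hinner : ∑ s ∈ Finset.range r, ((s:ℝ)+2)^(-2:ℝ) * ((r:ℝ)-(s:ℝ))^(-2+ε')
        ≤ 8*T * (r:ℝ)^(-2+ε') := by
      rw [hpe]
      calc ∑ s ∈ Finset.range r, ((s:ℝ)+2)^(-2:ℝ) * ((r:ℝ)-(s:ℝ))^(-p)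
          ≤ ∑ s ∈ Finset.range r,
              4 * (r:ℝ)^(-p) * (((s:ℝ)+2)^(-2:ℝ) + ((r:ℝ)-(s:ℝ))^(-p)) := by
            refine Finset.sum_le_sum fun s hs => ?_
            exact aux_pt p hp1 hp2 r s (Finset.mem_range.mp hs)
        _ = 4 * (r:ℝ)^(-p) * ((∑ s ∈ Finset.range r, ((s:ℝ)+2)^(-2:ℝ))
              + ∑ s ∈ Finset.range r, ((r:ℝ)-(s:ℝ))^(-p)) := by
            rw [← Finset.mul_sum, Finset.sum_add_distrib]
        _ ≤ 4 * (r:ℝ)^(-p) * (T + T) := by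
            refine mul_le_mul_of_nonneg_left (add_le_add (hA r) (hB r)) (by positivity)
        _ = 8*T * (r:ℝ)^(-p) := by ring
    calc M r * ∑ s ∈ Finset.range r, ((s:ℝ)+2)^(-2:ℝ) * ((r:ℝ)-(s:ℝ))^(-2+ε')
        ≤ M r * (8*T * (r:ℝ)^(-2+ε')) := mul_le_mul_of_nonneg_left hinner (hM r)
      _ = (8*T) * (M r * (r:ℝ)^(-2+ε')) := by ring
  calc ∑ r ∈ Finset.Icc 1 (j-1),
        M r * ∑ s ∈ Finset.range r, ((s:ℝ)+2)^(-2:ℝ) * ((r:ℝ)-(s:ℝ))^(-2+ε')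
      ≤ ∑ r ∈ Finset.Icc 1 (j-1), (8*T) * (M r * (r:ℝ)^(-2+ε')) :=
        Finset.sum_le_sum hkey
    _ = (8*T) * ∑ l ∈ Finset.Icc 1 (j-1), M l * (l:ℝ)^(-2+ε') := by
        rw [Finset.mul_sum]
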